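/- Let q ∈ ℂ with q^{2k} ≠ 1 for 1 ≤ k ≤ ℓ. Then for all 0 ≤ m, n ≤ ℓ: ⟨ℓ,m|| (~||ℓ,n⟩) = δ_{m,n}, and ~⟨ℓ,n|| (~||ℓ,n⟩) = ([ℓ¦n]_q / C(ℓ,n))². -/

import Mathlib

open Matrix Complex Finset Filter

noncomputable section

/-- q-integer `[n]_q = (q^n - q^{-n})/(q - q⁻¹)`. -/
def qint (q : ℂ) (n : ℕ) : ℂ := (q ^ n - q⁻¹ ^ n) / (q - q⁻¹)

/-- q-factorial `[n]_q!`. -/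
def qfact (q : ℂ) (n : ℕ) : ℂ := ∏ k ∈ Finset.range n, qint q (k + 1)

/-- q-binomial coefficient `[m ¦ n]_q`. -/
def qbinom (q : ℂ) (m n : ℕ) : ℂ := qfact q m / (qfact q (m - n) * qfact q n)

/-- The set of positions where the configuration `c` equals `1`. -/
def oneSet {m : ℕ} (c : Fin m → Fin 2) : Finset (Fin m) :=
  Finset.univ.filter fun i => c i = 1

/-- The exponent `Σ(S) − n m + n(n−1)/2` (positions counted `1,…,m`). -/
def expKet (m n : ℕ) (S : Finset (Fin m)) : ℤ :=
  (∑ i ∈ S, ((i : ℤ) + 1)) - (n : ℤ) * (m : ℤ) + ((n * (n - 1) / 2 : ℕ) : ℤ)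

/-- Coefficients of the ket `||m, n⟩` in the standard basis. -/
def ketCoef (q : ℂ) (m n : ℕ) (c : Fin m → Fin 2) : ℂ :=
  if (oneSet c).card = n then q ^ expKet m n (oneSet c) else 0

/-- Coefficients of the bra `⟨m, n||` in the standard (bilinear) dual basis. -/
def braCoef (q : ℂ) (m n : ℕ) (c : Fin m → Fin 2) : ℂ :=
  (qbinom q m n)⁻¹ * q ^ ((n : ℤ) * ((m : ℤ) - (n : ℤ))) * ketCoef q m n c

/-- Coefficients of the tilde bra `~⟨m, n||`. -/
def tbraCoef (q : ℂ) (m n : ℕ) (c : Fin m → Fin 2) : ℂ :=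
  ((m.choose n : ℂ))⁻¹ *
    (if (oneSet c).card = n then q ^ (-(expKet m n (oneSet c))) else 0)

/-- Coefficients of the tilde ket `~||m, n⟩`. -/
def tketCoef (q : ℂ) (m n : ℕ) (c : Fin m → Fin 2) : ℂ :=
  qbinom q m n * q ^ (-((n : ℤ) * ((m : ℤ) - (n : ℤ)))) * ((m.choose n : ℂ))⁻¹ *
    (if (oneSet c).card = n then q ^ (-(expKet m n (oneSet c))) else 0)


lemma qsub_ne (q : ℂ) (hq0 : q ≠ 0) (h : q^2 ≠ 1) : q - q⁻¹ ≠ 0 := by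
  have h1 : q - q⁻¹ = (q^2 - 1) / q := by field_simp
  rw [h1]; exact div_ne_zero (sub_ne_zero.2 h) hq0

lemma qnum_ne (q : ℂ) (hq0 : q ≠ 0) (k : ℕ) (hk : q^(2*k) ≠ 1) : q^k - q⁻¹^k ≠ 0 := by
  have h1 : q^k - q⁻¹^k = (q^(2*k) - 1)/q^k := by rw [two_mul, pow_add]; field_simp; rw [one_div, inv_pow, mul_sub, mul_inv_cancel₀ (pow_ne_zero _ hq0)]; ring
  rw [h1]; exact div_ne_zero (sub_ne_zero.2 hk) (pow_ne_zero _ hq0)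

lemma qint_ne (q : ℂ) (hq0 : q ≠ 0) (h2 : q^2 ≠ 1) (k : ℕ) (hk : q^(2*k) ≠ 1) : qint q k ≠ 0 :=
  div_ne_zero (qnum_ne q hq0 k hk) (qsub_ne q hq0 h2)

lemma qfact_ne (q : ℂ) (hq0 : q ≠ 0) (m : ℕ)
    (hq : ∀ k : ℕ, 1 ≤ k → k ≤ m → q^(2*k) ≠ 1) {n : ℕ} (hn : n ≤ m) : qfact q n ≠ 0 := by
  unfold qfact
  rw [Finset.prod_ne_zero_iff]
  intro k hk
  rw [Finset.mem_range] at hk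
  have h2 : q ^ 2 ≠ 1 := by simpa using hq 1 le_rfl (by omega)
  exact qint_ne q hq0 h2 (k+1) (hq (k+1) (by omega) (by omega))

lemma qbinom_ne (q : ℂ) (hq0 : q ≠ 0) (m : ℕ)
    (hq : ∀ k : ℕ, 1 ≤ k → k ≤ m → q^(2*k) ≠ 1) {n : ℕ} (hn : n ≤ m) : qbinom q m n ≠ 0 :=
  div_ne_zero (qfact_ne q hq0 m hq le_rfl)
    (mul_ne_zero (qfact_ne q hq0 m hq (by omega)) (qfact_ne q hq0 m hq hn))

lemma qfact_succ (q : ℂ) (n : ℕ) : qfact q (n+1) = qfact q n * qint q (n+1) :=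
  Finset.prod_range_succ _ _

lemma qbinom_pascal (q : ℂ) (hq0 : q ≠ 0) (e d : ℕ)
    (hq : ∀ k : ℕ, 1 ≤ k → k ≤ e + d + 1 → q^(2*k) ≠ 1) :
    qbinom q (e+d+2) (e+1) =
      q^(e+1) * qbinom q (e+d+1) (e+1) + q^(e+1) * (q^(e+d+2))⁻¹ * qbinom q (e+d+1) e := by
  have h2 : q^2 ≠ 1 := by simpa using hq 1 le_rfl (by omega)
  have hsub : q - q⁻¹ ≠ 0 := qsub_ne q hq0 h2
  have hd1 : q^(d+1) - q⁻¹^(d+1) ≠ 0 := qnum_ne q hq0 (d+1) (hq (d+1) (by omega) (by omega))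
  have he1 : q^(e+1) - q⁻¹^(e+1) ≠ 0 := qnum_ne q hq0 (e+1) (hq (e+1) (by omega) (by omega))
  have hfd : qfact q d ≠ 0 := qfact_ne q hq0 (e+d+1) hq (by omega)
  have hfe : qfact q e ≠ 0 := qfact_ne q hq0 (e+d+1) hq (by omega)
  unfold qbinom
  have e1 : e+d+2 - (e+1) = d+1 := by omega
  have e2 : e+d+1 - (e+1) = d := by omega
  have e3 : e+d+1 - e = d+1 := by omega
  have ha : qint q (d+1) ≠ 0 := qint_ne q hq0 h2 (d+1) (hq (d+1) (by omega) (by omega))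
  have hb : qint q (e+1) ≠ 0 := qint_ne q hq0 h2 (e+1) (hq (e+1) (by omega) (by omega))
  have key : qint q (e+d+2) = q^(e+1) * qint q (d+1) + q^(e+1) * (q^(e+d+2))⁻¹ * qint q (e+1) := by
    have key' : q ^ (e+d+2) - q⁻¹ ^ (e+d+2) =
        q ^ (e + 1) * (q ^ (d + 1) - q⁻¹ ^ (d + 1)) +
          q ^ (e + 1) * (q ^ (e + d + 2))⁻¹ * (q ^ (e + 1) - q⁻¹ ^ (e + 1)) := by
      simp only [inv_pow]
      field_simp
      ring
    unfold qint
    rw [key', add_div]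
    ring
  rw [e1, e2, e3, show e+d+2 = (e+d+1)+1 from rfl, qfact_succ, qfact_succ q d, qfact_succ q e, key]
  have hM : (q : ℂ)^(e+d+2) ≠ 0 := pow_ne_zero _ hq0
  generalize qint q (d+1) = a at ha ⊢
  generalize qint q (e+1) = b at hb ⊢
  generalize qfact q (e+d+1) = x
  generalize hP : (q : ℂ)^(e+1) = P
  generalize (q : ℂ)^(e+d+2) = Q at hM ⊢
  generalize qfact q d = fd at hfd ⊢
  generalize qfact q e = fe at hfe ⊢
  rw [div_eq_iff (by exact mul_ne_zero (mul_ne_zero hfd ha) (mul_ne_zero hfe hb)),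
    div_eq_inv_mul, div_eq_inv_mul, mul_inv, mul_inv, mul_inv]
  have c1 := mul_inv_cancel₀ ha
  have c2 := mul_inv_cancel₀ hb
  have c3 := mul_inv_cancel₀ hfd
  have c4 := mul_inv_cancel₀ hfe
  have c5 := mul_inv_cancel₀ hM
  linear_combination (-(x*P*Q⁻¹*b*fe*fe⁻¹*a*a⁻¹)) * c3 + (-(x*P*Q⁻¹*b*a*a⁻¹)) * c4 +
    (-(x*P*Q⁻¹*b)) * c1 + (-(x*P*a*fe*fe⁻¹*b*b⁻¹)) * c3 + (-(x*P*a*b*b⁻¹)) * c4 + (-(x*P*a)) * c2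

def sSum (x : ℂ) (m n : ℕ) : ℂ := ∑ A ∈ (Finset.range m).powersetCard n, ∏ i ∈ A, x^(i+1)

lemma sSum_zero (x : ℂ) (m : ℕ) : sSum x m 0 = 1 := by simp [sSum]

lemma sSum_top (x : ℂ) (m n : ℕ) (h : m < n) : sSum x m n = 0 := by
  have : (Finset.range m).powersetCard n = ∅ := by
    rw [Finset.powersetCard_eq_empty]
    simpa using h
  simp [sSum, this]

lemma sSum_succ (x : ℂ) (m n : ℕ) :
    sSum x (m+1) (n+1) = sSum x m (n+1) + x^(m+1) * sSum x m n := by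
  unfold sSum
  rw [Finset.range_add_one, Finset.powersetCard_succ_insert Finset.notMem_range_self]
  rw [Finset.sum_union]
  · congr 1
    rw [Finset.sum_image, Finset.mul_sum]
    · refine Finset.sum_congr rfl fun A hA => ?_
      have hm : m ∉ A := fun h => Finset.notMem_range_self ((Finset.mem_powersetCard.1 hA).1 h)
      rw [Finset.prod_insert hm]
    · intro A hA B hB h
      have hmA : m ∉ A := fun h => Finset.notMem_range_self ((Finset.mem_powersetCard.1 hA).1 h)
      have hmB : m ∉ B := fun h => Finset.notMem_range_self ((Finset.mem_powersetCard.1 hB).1 h)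
      rw [← Finset.erase_insert hmA, h, Finset.erase_insert hmB]
  · rw [Finset.disjoint_left]
    rintro A hA hA2
    obtain ⟨B, _, rfl⟩ := Finset.mem_image.1 hA2
    exact Finset.notMem_range_self ((Finset.mem_powersetCard.1 hA).1 (Finset.mem_insert_self m B))

lemma qfact_zero (q : ℂ) : qfact q 0 = 1 := by simp [qfact]

lemma qbinom_self (q : ℂ) (j : ℕ) (h : qfact q j ≠ 0) : qbinom q j j = 1 := by
  unfold qbinom
  rw [Nat.sub_self, qfact_zero, one_mul, div_self h]

lemma qbinom_zero (q : ℂ) (j : ℕ) (h : qfact q j ≠ 0) : qbinom q j 0 = 1 := by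
  unfold qbinom
  rw [Nat.sub_zero, qfact_zero, mul_one, div_self h]

lemma sSum_eq (q : ℂ) (hq0 : q ≠ 0) :
    ∀ m : ℕ, (∀ k : ℕ, 1 ≤ k → k ≤ m → q^(2*k) ≠ 1) → ∀ n, n ≤ m →
    sSum ((q^2)⁻¹) m n = (q ^ (n * (m+1)))⁻¹ * qbinom q m n := by
  intro m
  induction m with
  | zero =>
    intro _ n hn
    interval_cases n
    simp [sSum_zero, qbinom, qfact]
  | succ m ih =>
    intro hq n hn
    have hq' : ∀ k : ℕ, 1 ≤ k → k ≤ m → q^(2*k) ≠ 1 := fun k h1 h2 => hq k h1 (by omega)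
    match n with
    | 0 => simp [sSum_zero, qbinom_zero q (m+1) (qfact_ne q hq0 (m+1) hq le_rfl)]
    | (k+1) =>
      rw [sSum_succ]
      rcases Nat.lt_or_ge k m with hk | hk
      · -- k+1 ≤ m
        obtain ⟨d, rfl⟩ : ∃ d, m = k + d + 1 := ⟨m - k - 1, by omega⟩
        rw [ih hq' (k+1) (by omega), ih hq' k (by omega),
          show k + d + 1 + 1 = k+d+2 from rfl, qbinom_pascal q hq0 k d hq']
        have h1 : (q:ℂ)^((k+1)*(k+d+1+1)) ≠ 0 := pow_ne_zero _ hq0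
        have h2 : (q:ℂ)^(k*(k+d+1+1)) ≠ 0 := pow_ne_zero _ hq0
        have h3 : (q:ℂ)^((k+1)*(k+d+2+1)) ≠ 0 := pow_ne_zero _ hq0
        simp only [inv_pow]
        field_simp
        ring
      · -- k = m
        have hkm : k = m := by omega
        subst hkm
        rw [sSum_top _ _ _ (by omega), ih hq' k le_rfl,
          qbinom_self q k (qfact_ne q hq0 k hq' le_rfl),
          qbinom_self q (k+1) (qfact_ne q hq0 (k+1) hq le_rfl)]
        simp only [inv_pow]
        field_simp
        ring

lemma key_sum (q : ℂ) (hq0 : q ≠ 0) (m : ℕ)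
    (hq : ∀ k : ℕ, 1 ≤ k → k ≤ m → q^(2*k) ≠ 1) {n : ℕ} (hn : n ≤ m) :
    ∑ S ∈ (Finset.univ : Finset (Fin m)).powersetCard n,
        ((q ^ (2 * ∑ i ∈ S, (i.val + 1)))⁻¹ : ℂ)
      = (q ^ (n * (m+1)))⁻¹ * qbinom q m n := by
  rw [← sSum_eq q hq0 m hq n hn]
  unfold sSum
  have hmap : (Finset.range m) = (Finset.univ : Finset (Fin m)).map Fin.valEmbedding := by
    rw [Fin.map_valEmbedding_univ, Nat.Iio_eq_range]
  rw [hmap, Finset.powersetCard_map, Finset.sum_map]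
  refine Finset.sum_congr rfl fun S hS => ?_
  rw [RelEmbedding.coe_toEmbedding, Finset.mapEmbedding_apply, Finset.prod_map]
  simp only [Fin.valEmbedding_apply]
  rw [Finset.prod_pow_eq_pow_sum, pow_mul, inv_pow]

lemma fin2cases (x : Fin 2) : x = 0 ∨ x = 1 := by fin_cases x <;> simp

def toConf {m : ℕ} (S : Finset (Fin m)) : Fin m → Fin 2 := fun i => if i ∈ S then 1 else 0

def confEquiv (m : ℕ) : (Fin m → Fin 2) ≃ Finset (Fin m) where
  toFun := oneSet
  invFun := toConf
  left_inv c := by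
    funext i
    unfold toConf oneSet
    simp only [Finset.mem_filter, Finset.mem_univ, true_and]
    rcases fin2cases (c i) with h | h <;> simp [h]
  right_inv S := by
    ext i
    unfold toConf oneSet
    simp only [Finset.mem_filter, Finset.mem_univ, true_and]
    split <;> simp_all

lemma sum_conf (m : ℕ) (f : Finset (Fin m) → ℂ) :
    ∑ c : Fin m → Fin 2, f (oneSet c) = ∑ S : Finset (Fin m), f S :=
  (confEquiv m).sum_comp f

lemma sum_ite_card (m n : ℕ) (g : Finset (Fin m) → ℂ) :
    (∑ S : Finset (Fin m), if S.card = n then g S else 0) =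
      ∑ S ∈ (Finset.univ : Finset (Fin m)).powersetCard n, g S := by
  rw [← Finset.sum_filter]
  congr 1
  ext S
  simp [Finset.mem_powersetCard]


/-- Duality of the bras and the tilde kets, and the normalization of the
tilde vectors. -/
theorem statement9 (q : ℂ) (hq0 : q ≠ 0) (m : ℕ)
    (hq : ∀ k : ℕ, 1 ≤ k → k ≤ m → q ^ (2 * k) ≠ 1) :
    (∀ mm nn : ℕ, mm ≤ m → nn ≤ m →
      ∑ c : Fin m → Fin 2, braCoef q m mm c * tketCoef q m nn c =
        if mm = nn then 1 else 0) ∧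
    (∀ nn : ℕ, nn ≤ m →
      ∑ c : Fin m → Fin 2, tbraCoef q m nn c * tketCoef q m nn c =
        (qbinom q m nn / (m.choose nn : ℂ)) ^ 2) := by
  constructor
  · intro mm nn hmm hnn
    by_cases h : mm = nn
    · subst h
      rw [if_pos rfl]
      have hterm : ∀ c : Fin m → Fin 2, braCoef q m mm c * tketCoef q m mm c =
          if (oneSet c).card = mm then ((m.choose mm : ℂ))⁻¹ else 0 := by
        intro c
        unfold braCoef tketCoef ketCoef
        by_cases hc : (oneSet c).card = mm
        · rw [if_pos hc, if_pos hc, if_pos hc]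
          have h1 : qbinom q m mm ≠ 0 := qbinom_ne q hq0 m hq hmm
          have h2 : (q : ℂ) ^ ((mm : ℤ) * ((m : ℤ) - (mm : ℤ))) ≠ 0 := zpow_ne_zero _ hq0
          have h3 : (q : ℂ) ^ expKet m mm (oneSet c) ≠ 0 := zpow_ne_zero _ hq0
          rw [_root_.zpow_neg, _root_.zpow_neg]
          calc (qbinom q m mm)⁻¹ * q ^ ((mm : ℤ) * ((m : ℤ) - (mm : ℤ))) *
                q ^ expKet m mm (oneSet c) *
                (qbinom q m mm * (q ^ ((mm : ℤ) * ((m : ℤ) - (mm : ℤ))))⁻¹ *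
                  ((m.choose mm : ℂ))⁻¹ * (q ^ expKet m mm (oneSet c))⁻¹)
              = (qbinom q m mm)⁻¹ * qbinom q m mm *
                (q ^ ((mm : ℤ) * ((m : ℤ) - (mm : ℤ))) * (q ^ ((mm : ℤ) * ((m : ℤ) - (mm : ℤ))))⁻¹) *
                (q ^ expKet m mm (oneSet c) * (q ^ expKet m mm (oneSet c))⁻¹) *
                ((m.choose mm : ℂ))⁻¹ := by ring
            _ = ((m.choose mm : ℂ))⁻¹ := by
                rw [inv_mul_cancel₀ h1, mul_inv_cancel₀ h2, mul_inv_cancel₀ h3]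
                ring
        · simp [hc]
      rw [Finset.sum_congr rfl (fun c _ => hterm c),
        sum_conf m (fun S => if S.card = mm then ((m.choose mm : ℂ))⁻¹ else 0),
        sum_ite_card, Finset.sum_const, Finset.card_powersetCard, Finset.card_univ,
        Fintype.card_fin, nsmul_eq_mul]
      exact mul_inv_cancel₀ (Nat.cast_ne_zero.2 (Nat.choose_pos hmm).ne')
    · rw [if_neg h]
      apply Finset.sum_eq_zero
      intro c _
      unfold braCoef tketCoef ketCoef
      by_cases h1 : (oneSet c).card = mm
      · by_cases h2 : (oneSet c).card = nn
        · exact absurd (h1.symm.trans h2) h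
        · rw [if_neg h2]
          ring
      · rw [if_neg h1]
        ring
  · intro n hn
    have hch : ((m.choose n : ℂ)) ≠ 0 := Nat.cast_ne_zero.2 (Nat.choose_pos hn).ne'
    set B : ℤ := 2*(n:ℤ)*(m:ℤ) - ((n*(n-1) : ℕ) : ℤ) - (n:ℤ)*((m:ℤ)-(n:ℤ)) with hB
    set C0 : ℂ := qbinom q m n * ((m.choose n : ℂ))⁻¹ * ((m.choose n : ℂ))⁻¹ * q ^ B with hC0
    have h2T : (n*(n-1)/2) * 2 = n*(n-1) := by
      apply Nat.div_mul_cancel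
      rcases n with _ | k
      · simp
      · rw [Nat.succ_sub_one, Nat.mul_comm]
        exact (Nat.even_mul_succ_self k).two_dvd
    have hterm : ∀ S : Finset (Fin m), S.card = n →
        (((m.choose n : ℂ))⁻¹ * q ^ (-(expKet m n S))) *
          (qbinom q m n * q ^ (-((n : ℤ) * ((m : ℤ) - (n : ℤ)))) * ((m.choose n : ℂ))⁻¹ *
            q ^ (-(expKet m n S))) =
          C0 * (q ^ (2 * ∑ i ∈ S, (i.val + 1)))⁻¹ := by
      intro S hS
      have hSig : (∑ i ∈ S, ((i : ℤ) + 1)) = ((∑ i ∈ S, (i.val + 1) : ℕ) : ℤ) := by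
        rw [Nat.cast_sum]
        refine Finset.sum_congr rfl fun i _ => ?_
        push_cast
        rfl
      have hexp : -((n : ℤ) * ((m : ℤ) - (n : ℤ))) + (-(expKet m n S) + -(expKet m n S)) =
          B + (-((2 * ∑ i ∈ S, (i.val + 1) : ℕ) : ℤ)) := by
        have hcast : ((n*(n-1)/2 : ℕ) : ℤ) * 2 = ((n*(n-1) : ℕ) : ℤ) := by
          exact_mod_cast congrArg (Nat.cast : ℕ → ℤ) h2T
        unfold expKet
        rw [hSig, hB]
        push_cast
        push_cast at hcast
        linear_combination -hcast
      calc (((m.choose n : ℂ))⁻¹ * q ^ (-(expKet m n S))) *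
          (qbinom q m n * q ^ (-((n : ℤ) * ((m : ℤ) - (n : ℤ)))) * ((m.choose n : ℂ))⁻¹ *
            q ^ (-(expKet m n S)))
          = qbinom q m n * ((m.choose n : ℂ))⁻¹ * ((m.choose n : ℂ))⁻¹ *
            (q ^ (-((n : ℤ) * ((m : ℤ) - (n : ℤ)))) * (q ^ (-(expKet m n S)) * q ^ (-(expKet m n S)))) := by ring
        _ = qbinom q m n * ((m.choose n : ℂ))⁻¹ * ((m.choose n : ℂ))⁻¹ *
            q ^ (-((n : ℤ) * ((m : ℤ) - (n : ℤ))) + (-(expKet m n S) + -(expKet m n S))) := by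
            rw [zpow_add₀ hq0, zpow_add₀ hq0]
        _ = C0 * (q ^ (2 * ∑ i ∈ S, (i.val + 1)))⁻¹ := by
            rw [hexp, zpow_add₀ hq0, _root_.zpow_neg, zpow_natCast, hC0]
            ring
    have hsum : ∑ c : Fin m → Fin 2, tbraCoef q m n c * tketCoef q m n c =
        ∑ S ∈ (Finset.univ : Finset (Fin m)).powersetCard n,
          (C0 * (q ^ (2 * ∑ i ∈ S, (i.val + 1)))⁻¹) := by
      unfold tbraCoef tketCoef
      rw [sum_conf m (fun S => ((m.choose n : ℂ))⁻¹ *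
          (if S.card = n then q ^ (-(expKet m n S)) else 0) *
          (qbinom q m n * q ^ (-((n : ℤ) * ((m : ℤ) - (n : ℤ)))) * ((m.choose n : ℂ))⁻¹ *
            (if S.card = n then q ^ (-(expKet m n S)) else 0)))]
      rw [← sum_ite_card m n]
      refine Finset.sum_congr rfl fun S _ => ?_
      by_cases hS : S.card = n
      · rw [if_pos hS, if_pos hS]
        exact hterm S hS
      · simp [hS]
    rw [hsum, ← Finset.mul_sum, key_sum q hq0 m hq hn, hC0]
    have hBz : B + (-(((n * (m+1) : ℕ)) : ℤ)) = 0 := by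
      rw [hB]
      rcases n with _ | k
      · simp
      · have : ((k+1) * ((k+1) - 1) : ℕ) = (k+1) * k := rfl
        rw [this]
        push_cast
        ring
    have hpow : q ^ B * (q ^ (n * (m+1)))⁻¹ = 1 := by
      rw [← zpow_natCast q (n*(m+1)), ← _root_.zpow_neg, ← zpow_add₀ hq0, hBz, zpow_zero]
    calc qbinom q m n * ((m.choose n : ℂ))⁻¹ * ((m.choose n : ℂ))⁻¹ * q ^ B *
          ((q ^ (n * (m + 1)))⁻¹ * qbinom q m n)
        = qbinom q m n * ((m.choose n : ℂ))⁻¹ * ((m.choose n : ℂ))⁻¹ * qbinom q m n *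
          (q ^ B * (q ^ (n * (m + 1)))⁻¹) := by ring
      _ = (qbinom q m n / (m.choose n : ℂ)) ^ 2 := by
          rw [hpow, mul_one]
          ring
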